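/- Let L = sl₂(F) over a field F of characteristic zero with standard basis x, h, y satisfying [h,x] = 2x, [h,y] = −2y, [x,y] = h. Then for every α ∈ F the element r = α(h⊗x − x⊗h) + (1/4)h⊗h + x⊗y is a non skew-symmetric solution of the classical Yang–Baxter equation on L, and r + τ(r) is L-invariant. -/

import Mathlib

open TensorProduct

/-- The classical Yang–Baxter equation for `r = ∑ i, a i ⊗ b i`. -/
def CYBE {F L : Type*} [Field F] [AddCommGroup L] [Module F L]
    (mul : L →ₗ[F] L →ₗ[F] L) {n : ℕ} (a b : Fin n → L) : Prop :=
  ∑ i : Fin n, ∑ j : Fin n,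
      (mul (a i) (a j) ⊗ₜ[F] (b i ⊗ₜ[F] b j)
        - a i ⊗ₜ[F] (mul (a j) (b i) ⊗ₜ[F] b j)
        + a i ⊗ₜ[F] (a j ⊗ₜ[F] mul (b i) (b j))) = 0

/-- The Lie bracket of a Lie algebra as a bilinear map. -/
def brkt (F L : Type*) [Field F] [LieRing L] [LieAlgebra F L] : L →ₗ[F] L →ₗ[F] L :=
  LinearMap.mk₂ F (fun u v => ⁅u, v⁆) add_lie smul_lie lie_add lie_smul

theorem stmt12 {F L : Type*} [Field F] [CharZero F] [LieRing L] [LieAlgebra F L]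
    -- `L = sl₂(F)` with standard basis `x, h, y`
    (bb : Module.Basis (Fin 3) F L) (x h y : L)
    (hb0 : bb 0 = x) (hb1 : bb 1 = h) (hb2 : bb 2 = y)
    (hhx : ⁅h, x⁆ = (2 : F) • x) (hhy : ⁅h, y⁆ = (-2 : F) • y) (hxy : ⁅x, y⁆ = h)
    (α : F)
    -- `r = α(h⊗x - x⊗h) + (1/4)h⊗h + x⊗y`, written as `∑ i, a i ⊗ b i`
    (a b : Fin 4 → L)
    (ha : a = ![α • h, α • x, (4⁻¹ : F) • h, x])
    (hb : b = ![x, -h, h, y]) :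
    CYBE (brkt F L) a b ∧
    (∑ i, b i ⊗ₜ[F] a i ≠ -∑ i, a i ⊗ₜ[F] b i) ∧
    (∀ c : L, ∑ i, (⁅a i, c⁆ ⊗ₜ[F] b i + a i ⊗ₜ[F] ⁅b i, c⁆
        + ⁅b i, c⁆ ⊗ₜ[F] a i + b i ⊗ₜ[F] ⁅a i, c⁆) = 0) := by
  subst ha hb
  have hxh : ⁅x, h⁆ = (-2 : F) • x := by rw [← lie_skew, hhx]; module
  have hyh : ⁅y, h⁆ = (2 : F) • y := by rw [← lie_skew, hhy]; module
  have hyx : ⁅y, x⁆ = -h := by rw [← lie_skew, hxy]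
  refine ⟨?_, ?_, ?_⟩
  · unfold CYBE brkt
    simp only [Fin.sum_univ_four, Matrix.cons_val_zero, Matrix.cons_val_one, Matrix.head_cons,
      Matrix.cons_val_two, Matrix.tail_cons, Matrix.cons_val_three, LinearMap.mk₂_apply,
      smul_lie, lie_smul, lie_self, lie_neg, neg_lie, hhx, hhy, hxy, hxh, hyh, hyx,
      ← smul_tmul', tmul_smul, add_tmul, tmul_add, neg_tmul, tmul_neg, zero_tmul, tmul_zero,
      smul_zero, smul_neg, smul_smul, neg_neg, smul_add]
    module
  · intro heq
    have h2 := congrArg (fun z => (Module.Basis.tensorProduct bb bb).repr z (1, 1)) heq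
    simp only [← hb0, ← hb1, ← hb2, Fin.sum_univ_four, Matrix.cons_val_zero,
      Matrix.cons_val_one, Matrix.head_cons, Matrix.cons_val_two, Matrix.tail_cons,
      Matrix.cons_val_three, ← smul_tmul', tmul_smul, neg_tmul, tmul_neg, map_add, map_neg,
      map_smul, Module.Basis.tensorProduct_repr_tmul_apply, Module.Basis.repr_self, Finsupp.coe_add,
      Finsupp.coe_neg, Finsupp.coe_smul, Pi.add_apply, Pi.neg_apply, Pi.smul_apply,
      Finsupp.single_apply, smul_eq_mul] at h2
    norm_num at h2
  · intro c
    obtain ⟨c0, c1, c2, rfl⟩ : ∃ c0 c1 c2 : F, c = c0 • x + c1 • h + c2 • y := by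
      refine ⟨bb.repr c 0, bb.repr c 1, bb.repr c 2, ?_⟩
      have hs := bb.sum_repr c
      rw [Fin.sum_univ_three, hb0, hb1, hb2] at hs
      exact hs.symm
    simp only [Fin.sum_univ_four, Matrix.cons_val_zero, Matrix.cons_val_one, Matrix.head_cons,
      Matrix.cons_val_two, Matrix.tail_cons, Matrix.cons_val_three,
      lie_add, lie_smul, smul_lie, neg_lie, lie_neg, lie_self, hhx, hhy, hxy, hxh, hyh, hyx,
      ← smul_tmul', tmul_smul, add_tmul, tmul_add, neg_tmul, tmul_neg, zero_tmul, tmul_zero,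
      smul_zero, smul_neg, smul_smul, neg_neg, smul_add, add_zero, zero_add]
    module
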